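/- The sum of the displacement fields of two wedge dislocations with deficit angles ±θ at (0, ±a), expanded to first order in θ and a/r, equals (up to a constant translation) the edge-dislocation field u_x = b[arctan(y/x) + (1/(2(1−σ))) xy/(x²+y²)], u_y = −b[((1−2σ)/(2(1−σ))) ln(r/(eR)) + (1/(2(1−σ))) x²/(x²+y²)], with b = −2aθ. -/

import Mathlib

set_option maxHeartbeats 1000000

lemma log_third (t : ℝ) (h : |t| ≤ 1/2) :
    |Real.log (1+t) - Real.log (1-t) - 2*t| ≤ 4*|t|^3 := by
  have h1 : |t| < 1 := lt_of_le_of_lt h (by norm_num)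
  have h2 : |(-t)| < 1 := by rwa [abs_neg]
  have A := Real.abs_log_sub_add_sum_range_le h1 2
  have B := Real.abs_log_sub_add_sum_range_le h2 2
  simp [Finset.sum_range_succ] at A B
  have htnn := abs_nonneg t
  have hd : |t|^3/(1-|t|) ≤ 2*|t|^3 := by
    rw [div_le_iff₀ (by linarith)]
    nlinarith [pow_nonneg htnn 3]
  have key : Real.log (1+t) - Real.log (1-t) - 2*t =
      (-t + t^2/(1+1) + Real.log (1+t)) + -(t + t^2/(1+1) + Real.log (1-t)) := by ring
  rw [key]
  have t1 := abs_add_le (-t + t^2/(1+1) + Real.log (1+t)) (-(t + t^2/(1+1) + Real.log (1-t)))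
  rw [abs_neg] at t1
  linarith

lemma log_one_sub_bound (s : ℝ) (h0 : 0 ≤ s) (h1 : s ≤ 1/2) :
    |Real.log (1-s)| ≤ 2*s := by
  have hp : (0:ℝ) < 1 - s := by linarith
  have hle : Real.log (1-s) ≤ 0 := Real.log_nonpos (by linarith) (by linarith)
  have h2 : Real.log (1-s)⁻¹ ≤ (1-s)⁻¹ - 1 := Real.log_le_sub_one_of_pos (by positivity)
  rw [Real.log_inv] at h2
  rw [abs_of_nonpos hle]
  have e : (1-s)⁻¹ - 1 = s/(1-s) := by field_simp; ring
  rw [e] at h2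
  have : s/(1-s) ≤ 2*s := by rw [div_le_iff₀ hp]; nlinarith
  linarith

/-- The sum of the (first-order) displacement fields of two wedge dislocations with
deficit angles `±θ` located at `(0, ±a)` equals, to first order in `a/r` (the fields are
already first order in `θ`) and up to a constant translation `v` along the `y` axis, the
edge-dislocation field with Burgers vector `b = −2aθ`:
`u_x = b[arctan(y/x) + xy/(2(1−σ)(x²+y²))]`,
`u_y = −b[((1−2σ)/(2(1−σ))) ln(r/(eR)) + x²/(2(1−σ)(x²+y²))]`.
The error is bounded by `C/r` far from the dislocation dipole. -/
theorem stmt18 (σ R a θ : ℝ) (hσ1 : -1 ≤ σ) (hσ2 : σ < 1/2) (hR : 0 < R) (ha : 0 < a) :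
    let c := (1 - 2*σ) / (2 * (1 - σ))
    let b := -2 * a * θ
    ∃ v Cb K : ℝ, 0 < Cb ∧ 0 < K ∧
      ∀ x y : ℝ, 0 < x → K ≤ Real.sqrt (x^2 + y^2) →
        let r := Real.sqrt (x^2 + y^2)
        let φ := Real.arctan (y/x)
        let sφ := y/r
        let cφ := x/r
        let u1x := -θ * (c * x * Real.log ((r - a*sφ) / (Real.exp 1 * R))
          - (y - a) * (φ - a*cφ/r))
        let u1y := -θ * (c * (y - a) * Real.log ((r - a*sφ) / (Real.exp 1 * R))
          + x * (φ - a*cφ/r))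
        let u2x := θ * (c * x * Real.log ((r + a*sφ) / (Real.exp 1 * R))
          - (y + a) * (φ + a*cφ/r))
        let u2y := θ * (c * (y + a) * Real.log ((r + a*sφ) / (Real.exp 1 * R))
          + x * (φ + a*cφ/r))
        let ux := b * (Real.arctan (y/x) + 1/(2*(1 - σ)) * (x*y/(x^2 + y^2)))
        let uy := -b * (c * Real.log (r / (Real.exp 1 * R))
          + 1/(2*(1 - σ)) * (x^2/(x^2 + y^2)))
        |u1x + u2x - ux| ≤ Cb / r ∧ |u1y + u2y - (uy + v)| ≤ Cb / r := by
  intro c b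
  have hc : c = (1 - 2*σ) / (2 * (1 - σ)) := rfl
  have hb : b = -2 * a * θ := rfl
  refine ⟨2*a*c*θ, 6 * (|θ| * |c| + 1) * a^3, 2*a+1, by positivity, by linarith, ?_⟩
  intro x y hx hK
  dsimp only
  set r := Real.sqrt (x^2 + y^2) with hrdef
  have hσ0 : (0:ℝ) < 1 - σ := by linarith
  have hr0 : (0:ℝ) < r := lt_of_lt_of_le (by linarith) hK
  have hr1 : (1:ℝ) ≤ r := by linarith
  have hra : 2*a ≤ r := by linarith
  have hr2 : x^2 + y^2 = r^2 := by rw [hrdef, Real.sq_sqrt (by positivity)]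
  have hy : |y| ≤ r := by
    rw [hrdef, ← Real.sqrt_sq_eq_abs]; exact Real.sqrt_le_sqrt (by nlinarith)
  have hxr : x ≤ r := le_trans (le_abs_self x)
    (by rw [hrdef, ← Real.sqrt_sq_eq_abs]; exact Real.sqrt_le_sqrt (by nlinarith))
  set t := a*y/r^2 with htdef
  have ht2 : |t| ≤ a/r := by
    rw [htdef, abs_div, abs_mul, abs_of_pos ha, abs_of_pos (pow_pos hr0 2),
      div_le_div_iff₀ (pow_pos hr0 2) hr0]
    nlinarith [mul_le_mul_of_nonneg_right (mul_le_mul_of_nonneg_left hy ha.le) hr0.le]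
  have hthalf : |t| ≤ 1/2 := ht2.trans (by rw [div_le_iff₀ hr0]; linarith)
  have h1mt : (0:ℝ) < 1 - t := by have := abs_le.mp hthalf; linarith [this.2]
  have h1pt : (0:ℝ) < 1 + t := by have := abs_le.mp hthalf; linarith [this.1]
  have hlm : Real.log ((r - a*(y/r))/(Real.exp 1 * R))
      = Real.log (1-t) + Real.log r - (1 + Real.log R) := by
    have e1 : r - a*(y/r) = (1-t)*r := by rw [htdef]; field_simp
    rw [e1, Real.log_div (mul_pos h1mt hr0).ne' (by positivity),
      Real.log_mul h1mt.ne' hr0.ne', Real.log_mul (Real.exp_ne_zero 1) hR.ne', Real.log_exp]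
  have hlp : Real.log ((r + a*(y/r))/(Real.exp 1 * R))
      = Real.log (1+t) + Real.log r - (1 + Real.log R) := by
    have e2 : r + a*(y/r) = (1+t)*r := by rw [htdef]; field_simp
    rw [e2, Real.log_div (mul_pos h1pt hr0).ne' (by positivity),
      Real.log_mul h1pt.ne' hr0.ne', Real.log_mul (Real.exp_ne_zero 1) hR.ne', Real.log_exp]
  have hl0 : Real.log (r/(Real.exp 1 * R)) = Real.log r - (1 + Real.log R) := by
    rw [Real.log_div hr0.ne' (by positivity),
      Real.log_mul (Real.exp_ne_zero 1) hR.ne', Real.log_exp]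
  rw [hlm, hlp, hl0, hr2]
  clear_value b c r t
  -- bounds for the log atoms
  have hD : |Real.log (1+t) - Real.log (1-t) - 2*t| ≤ 4*(a/r)^3 := by
    refine (log_third t hthalf).trans ?_
    have := pow_le_pow_left₀ (abs_nonneg t) ht2 3
    linarith
  have hS : |Real.log (1+t) + Real.log (1-t)| ≤ 2*(a/r)^2 := by
    have hsum : Real.log (1+t) + Real.log (1-t) = Real.log (1 - t^2) := by
      rw [show (1:ℝ) - t^2 = (1+t)*(1-t) by ring, Real.log_mul h1pt.ne' h1mt.ne']
    rw [hsum]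
    refine (log_one_sub_bound (t^2) (sq_nonneg t) ?_).trans ?_
    · nlinarith [hthalf, abs_nonneg t, sq_abs t]
    · have : t^2 ≤ (a/r)^2 := by
        rw [← sq_abs t]; exact pow_le_pow_left₀ (abs_nonneg t) ht2 2
      linarith
  generalize Real.log (1 + t) = Lp at hD hS ⊢
  generalize Real.log (1 - t) = Lm at hD hS ⊢
  have har : 0 < a/r := by positivity
  have hT : (0:ℝ) ≤ |θ| * |c| := by positivity
  constructor
  · have key1 : -θ * (c * x * (Lm + Real.log r - (1 + Real.log R)) -
          (y - a) * (Real.arctan (y / x) - a * (x / r) / r)) +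
        θ * (c * x * (Lp + Real.log r - (1 + Real.log R)) -
          (y + a) * (Real.arctan (y / x) + a * (x / r) / r)) -
        b * (Real.arctan (y / x) + 1 / (2 * (1 - σ)) * (x * y / r ^ 2))
        = θ * c * x * (Lp - Lm - 2 * t) := by
      rw [hc, hb, htdef]
      field_simp
      ring
    rw [key1]
    calc |θ * c * x * (Lp - Lm - 2 * t)| = |θ| * |c| * x * |Lp - Lm - 2*t| := by
          rw [abs_mul, abs_mul, abs_mul, abs_of_pos hx]
      _ ≤ |θ| * |c| * r * (4*(a/r)^3) := by gcongr
      _ = 4 * (|θ| * |c|) * a^3 / r^2 := by field_simp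
      _ ≤ 6 * (|θ| * |c| + 1) * a ^ 3 / r := by
          rw [div_le_div_iff₀ (by positivity) hr0]
          nlinarith [pow_pos ha 3, mul_nonneg (mul_nonneg hT (pow_nonneg ha.le 3))
            (mul_nonneg hr0.le (sub_nonneg.mpr hr1)),
            mul_nonneg (pow_nonneg ha.le 3) (mul_nonneg hr0.le (sub_nonneg.mpr hr1))]
  · have key2 : -θ * (c * (y - a) * (Lm + Real.log r - (1 + Real.log R)) +
          x * (Real.arctan (y / x) - a * (x / r) / r)) +
        θ * (c * (y + a) * (Lp + Real.log r - (1 + Real.log R)) +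
          x * (Real.arctan (y / x) + a * (x / r) / r)) -
        (-b * (c * (Real.log r - (1 + Real.log R)) + 1 / (2 * (1 - σ)) * (x ^ 2 / r ^ 2)) +
          2 * a * c * θ)
        = θ * c * (y * (Lp - Lm - 2 * t) + a * (Lp + Lm))
          + 2 * a * θ * c * ((x^2 + y^2 - r^2) / r^2) := by
      rw [hc, hb, htdef]
      field_simp
      ring
    rw [show x^2 + y^2 - r^2 = 0 by rw [hr2]; ring] at key2
    simp only [zero_div, mul_zero, add_zero] at key2
    rw [key2]
    calc |θ * c * (y * (Lp - Lm - 2 * t) + a * (Lp + Lm))|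
        = |θ| * |c| * |y * (Lp - Lm - 2 * t) + a * (Lp + Lm)| := by
          rw [abs_mul, abs_mul]
      _ ≤ |θ| * |c| * (|y| * |Lp - Lm - 2*t| + a * |Lp + Lm|) := by
          gcongr
          refine (abs_add_le _ _).trans ?_
          rw [abs_mul, abs_mul, abs_of_pos ha]
      _ ≤ |θ| * |c| * (r * (4*(a/r)^3) + a * (2*(a/r)^2)) := by gcongr
      _ = 6 * (|θ| * |c|) * a^3 / r^2 := by field_simp; ring
      _ ≤ 6 * (|θ| * |c| + 1) * a ^ 3 / r := by
          rw [div_le_div_iff₀ (by positivity) hr0]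
          nlinarith [pow_pos ha 3, mul_nonneg (mul_nonneg hT (pow_nonneg ha.le 3))
            (mul_nonneg hr0.le (sub_nonneg.mpr hr1)),
            mul_nonneg (pow_nonneg ha.le 3) (mul_nonneg hr0.le (sub_nonneg.mpr hr1))]
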